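/- Necessity in the closed-loop design separation (Corollary 14, forward direction): Let K := RatFunc ℝ with z := RatFunc.X, let A : n×n and B : n×m be real matrices over K, and let P_c : n×n, M_c : m×n be matrices over K. Define the 3×3 block realization R := [[A + (1−z)•1, B, 0],[0, 0, z•M_c],[1, 0, 1 − z•P_c]] (blocks indexed by x, u, δ with δ of dimension n). If a matrix S, whose first block column has blocks Φx (the (x,x) block), Φu (the (u,x) block), and S₃₁ (the (δ,x) block), satisfies S * (1 − R) = 1, then with Δc := (z•1 − A) * P_c − B * M_c one has Φx * Δc = P_c, Φu * Δc = M_c, and S₃₁ * Δc = z⁻¹•1. -/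

import Mathlib

open Matrix

noncomputable section

set_option synthInstance.maxHeartbeats 1000000
set_option maxHeartbeats 1000000

/-- A 3×3 block matrix. -/
def b3 {α n₁ n₂ n₃ m₁ m₂ m₃ : Type*}
    (M₁₁ : Matrix n₁ m₁ α) (M₁₂ : Matrix n₁ m₂ α) (M₁₃ : Matrix n₁ m₃ α)
    (M₂₁ : Matrix n₂ m₁ α) (M₂₂ : Matrix n₂ m₂ α) (M₂₃ : Matrix n₂ m₃ α)
    (M₃₁ : Matrix n₃ m₁ α) (M₃₂ : Matrix n₃ m₂ α) (M₃₃ : Matrix n₃ m₃ α) :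
    Matrix (n₁ ⊕ n₂ ⊕ n₃) (m₁ ⊕ m₂ ⊕ m₃) α :=
  Matrix.fromBlocks M₁₁ (Matrix.fromCols M₁₂ M₁₃)
    (Matrix.fromRows M₂₁ M₃₁) (Matrix.fromBlocks M₂₂ M₂₃ M₃₂ M₃₃)

/-- A real constant matrix regarded as a matrix of rational transfer functions. -/
def mR {n m : Type*} (M : Matrix n m ℝ) : Matrix n m (RatFunc ℝ) :=
  M.map (algebraMap ℝ (RatFunc ℝ))

/-- The transfer-function variable `z`. -/
def zz : RatFunc ℝ := RatFunc.X

lemma b3_mul {α n₁ n₂ n₃ m₁ m₂ m₃ p₁ p₂ p₃ : Type*} [CommRing α]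
    [Fintype m₁] [Fintype m₂] [Fintype m₃]
    (A₁₁ : Matrix n₁ m₁ α) (A₁₂ : Matrix n₁ m₂ α) (A₁₃ : Matrix n₁ m₃ α)
    (A₂₁ : Matrix n₂ m₁ α) (A₂₂ : Matrix n₂ m₂ α) (A₂₃ : Matrix n₂ m₃ α)
    (A₃₁ : Matrix n₃ m₁ α) (A₃₂ : Matrix n₃ m₂ α) (A₃₃ : Matrix n₃ m₃ α)
    (B₁₁ : Matrix m₁ p₁ α) (B₁₂ : Matrix m₁ p₂ α) (B₁₃ : Matrix m₁ p₃ α)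
    (B₂₁ : Matrix m₂ p₁ α) (B₂₂ : Matrix m₂ p₂ α) (B₂₃ : Matrix m₂ p₃ α)
    (B₃₁ : Matrix m₃ p₁ α) (B₃₂ : Matrix m₃ p₂ α) (B₃₃ : Matrix m₃ p₃ α) :
    b3 A₁₁ A₁₂ A₁₃ A₂₁ A₂₂ A₂₃ A₃₁ A₃₂ A₃₃ *
      b3 B₁₁ B₁₂ B₁₃ B₂₁ B₂₂ B₂₃ B₃₁ B₃₂ B₃₃ =
    b3 (A₁₁*B₁₁+A₁₂*B₂₁+A₁₃*B₃₁) (A₁₁*B₁₂+A₁₂*B₂₂+A₁₃*B₃₂) (A₁₁*B₁₃+A₁₂*B₂₃+A₁₃*B₃₃)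
      (A₂₁*B₁₁+A₂₂*B₂₁+A₂₃*B₃₁) (A₂₁*B₁₂+A₂₂*B₂₂+A₂₃*B₃₂) (A₂₁*B₁₃+A₂₂*B₂₃+A₂₃*B₃₃)
      (A₃₁*B₁₁+A₃₂*B₂₁+A₃₃*B₃₁) (A₃₁*B₁₂+A₃₂*B₂₂+A₃₃*B₃₂) (A₃₁*B₁₃+A₃₂*B₂₃+A₃₃*B₃₃) := by
  unfold b3
  ext (i|i|i) (j|j|j) <;>
    simp [Matrix.mul_apply, Fintype.sum_sum_type, Finset.sum_add_distrib] <;> ring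

lemma b3_one {α n₁ n₂ n₃ : Type*} [DecidableEq n₁] [DecidableEq n₂] [DecidableEq n₃]
    [Zero α] [One α] :
    (1 : Matrix (n₁ ⊕ n₂ ⊕ n₃) (n₁ ⊕ n₂ ⊕ n₃) α) = b3 1 0 0 0 1 0 0 0 1 := by
  unfold b3
  ext (i|i|i) (j|j|j) <;> simp [Matrix.one_apply]

lemma b3_ext {α n₁ n₂ n₃ m₁ m₂ m₃ : Type*}
    {A₁₁ B₁₁ : Matrix n₁ m₁ α} {A₁₂ B₁₂ : Matrix n₁ m₂ α} {A₁₃ B₁₃ : Matrix n₁ m₃ α}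
    {A₂₁ B₂₁ : Matrix n₂ m₁ α} {A₂₂ B₂₂ : Matrix n₂ m₂ α} {A₂₃ B₂₃ : Matrix n₂ m₃ α}
    {A₃₁ B₃₁ : Matrix n₃ m₁ α} {A₃₂ B₃₂ : Matrix n₃ m₂ α} {A₃₃ B₃₃ : Matrix n₃ m₃ α}
    (h : b3 A₁₁ A₁₂ A₁₃ A₂₁ A₂₂ A₂₃ A₃₁ A₃₂ A₃₃ = b3 B₁₁ B₁₂ B₁₃ B₂₁ B₂₂ B₂₃ B₃₁ B₃₂ B₃₃) :
    A₁₁ = B₁₁ ∧ A₁₂ = B₁₂ ∧ A₁₃ = B₁₃ ∧ A₂₁ = B₂₁ ∧ A₂₂ = B₂₂ ∧ A₂₃ = B₂₃ ∧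
      A₃₁ = B₃₁ ∧ A₃₂ = B₃₂ ∧ A₃₃ = B₃₃ := by
  unfold b3 at h
  rw [Matrix.fromBlocks_inj, Matrix.fromCols_ext_iff, Matrix.fromRows_ext_iff,
    Matrix.fromBlocks_inj] at h
  tauto

/-- **Necessity in the closed-loop design separation** (Corollary 14, forward
direction).  For the realization `R` of Fig. 8 (built from `(P_c, M_c)`), if a matrix
`S` with first block column `(Φx, Φu, S₃₁)` satisfies `S (1 - R) = 1`, then with
`Δc := (z•1 - A) P_c - B M_c` one has `Φx Δc = P_c`, `Φu Δc = M_c`, and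
`S₃₁ Δc = z⁻¹ • 1`. -/
theorem closed_loop_separation_necessity {n m : Type*} [Fintype n] [Fintype m]
    [DecidableEq n] [DecidableEq m]
    (A : Matrix n n ℝ) (B : Matrix n m ℝ)
    (Pc : Matrix n n (RatFunc ℝ)) (Mc : Matrix m n (RatFunc ℝ))
    (Φx : Matrix n n (RatFunc ℝ)) (S₁₂ : Matrix n m (RatFunc ℝ)) (S₁₃ : Matrix n n (RatFunc ℝ))
    (Φu : Matrix m n (RatFunc ℝ)) (S₂₂ : Matrix m m (RatFunc ℝ)) (S₂₃ : Matrix m n (RatFunc ℝ))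
    (S₃₁ : Matrix n n (RatFunc ℝ)) (S₃₂ : Matrix n m (RatFunc ℝ)) (S₃₃ : Matrix n n (RatFunc ℝ))
    (h : b3 Φx S₁₂ S₁₃ Φu S₂₂ S₂₃ S₃₁ S₃₂ S₃₃ *
        (1 - b3 (mR A + (1 - zz) • (1 : Matrix n n (RatFunc ℝ))) (mR B)
          (0 : Matrix n n (RatFunc ℝ))
          (0 : Matrix m n (RatFunc ℝ)) (0 : Matrix m m (RatFunc ℝ)) (zz • Mc)
          (1 : Matrix n n (RatFunc ℝ)) (0 : Matrix n m (RatFunc ℝ))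
          ((1 : Matrix n n (RatFunc ℝ)) - zz • Pc)) = 1) :
    let Δc := (zz • (1 : Matrix n n (RatFunc ℝ)) - mR A) * Pc - mR B * Mc
    Φx * Δc = Pc ∧ Φu * Δc = Mc ∧ S₃₁ * Δc = zz⁻¹ • (1 : Matrix n n (RatFunc ℝ)) := by
  intro Δc
  have hΔ : Δc = (zz • (1 : Matrix n n (RatFunc ℝ)) - mR A) * Pc - mR B * Mc := rfl
  have hz : zz ≠ 0 := RatFunc.X_ne_zero
  have hR : (1 : Matrix (n ⊕ m ⊕ n) (n ⊕ m ⊕ n) (RatFunc ℝ)) -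
      b3 (mR A + (1 - zz) • (1 : Matrix n n (RatFunc ℝ))) (mR B)
        (0 : Matrix n n (RatFunc ℝ))
        (0 : Matrix m n (RatFunc ℝ)) (0 : Matrix m m (RatFunc ℝ)) (zz • Mc)
        (1 : Matrix n n (RatFunc ℝ)) (0 : Matrix n m (RatFunc ℝ))
        ((1 : Matrix n n (RatFunc ℝ)) - zz • Pc) =
      b3 (zz • (1 : Matrix n n (RatFunc ℝ)) - mR A) (-(mR B)) 0
        0 1 (-(zz • Mc))
        (-(1 : Matrix n n (RatFunc ℝ))) 0 (zz • Pc) := by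
    unfold b3
    ext (i|i|i) (j|j|j) <;>
      simp [Matrix.one_apply] <;> (try split_ifs) <;> ring
  rw [hR, b3_mul, b3_one] at h
  obtain ⟨e11, e12, e13, e21, e22, e23, e31, e32, e33⟩ := b3_ext h
  simp only [Matrix.mul_zero, Matrix.zero_mul, Matrix.mul_one, Matrix.mul_neg,
    add_zero, zero_add, neg_zero, Matrix.mul_smul] at e11 e12 e13 e21 e22 e23 e31 e32 e33
  refine ⟨?_, ?_, ?_⟩
  · have h1 : Φx * (zz • (1 : Matrix n n (RatFunc ℝ)) - mR A) = 1 + S₁₃ := by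
      linear_combination (norm := abel) e11
    have h2 : Φx * mR B = S₁₂ := by linear_combination (norm := abel) -e12
    have h3 : S₁₃ * Pc = S₁₂ * Mc := (smul_right_injective _ hz (neg_add_eq_zero.mp e13)).symm
    rw [hΔ, Matrix.mul_sub, ← Matrix.mul_assoc, ← Matrix.mul_assoc, h1, h2,
      Matrix.add_mul, Matrix.one_mul, h3]
    abel
  · have h1 : Φu * (zz • (1 : Matrix n n (RatFunc ℝ)) - mR A) = S₂₃ := by
      linear_combination (norm := abel) e21
    have h2 : Φu * mR B = S₂₂ - 1 := by linear_combination (norm := abel) -e22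
    have h3 : S₂₃ * Pc = S₂₂ * Mc := (smul_right_injective _ hz (neg_add_eq_zero.mp e23)).symm
    rw [hΔ, Matrix.mul_sub, ← Matrix.mul_assoc, ← Matrix.mul_assoc, h1, h2,
      Matrix.sub_mul, Matrix.one_mul, h3]
    abel
  · have h1 : S₃₁ * (zz • (1 : Matrix n n (RatFunc ℝ)) - mR A) = S₃₃ := by
      linear_combination (norm := abel) e31
    have h2 : S₃₁ * mR B = S₃₂ := by linear_combination (norm := abel) -e32
    have h4 : zz • (S₃₃ * Pc - S₃₂ * Mc) = 1 := by
      rw [smul_sub]; linear_combination (norm := abel) e33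
    have h5 : S₃₃ * Pc - S₃₂ * Mc = zz⁻¹ • (1 : Matrix n n (RatFunc ℝ)) := by
      rw [← h4, smul_smul, inv_mul_cancel₀ hz, one_smul]
    rw [hΔ, Matrix.mul_sub, ← Matrix.mul_assoc, ← Matrix.mul_assoc, h1, h2]
    exact h5

end
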